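/- Let p ≥ 3 be an odd integer and q the multiplicative order of 2 modulo p. Let S be a complete prefix code such that q divides |u| for every u ∈ S, with lexicographic enumeration u₀ < u₁ < ⋯ < u_{n−1}. Then val_p(u_i) = (i : ZMod p) for every 0 ≤ i ≤ n−1; that is, the dyadic rationals of the leaves modulo p are 0, 1, 2, …, p−1, 0, 1, …, p−1, …, 0 from left to right. -/

import Mathlib

/-- `val_p(a₁ ⋯ aₙ) = Σ_{i=1}^n aᵢ · (2⁻¹)^i ∈ ZMod p`, the reduction of
`ρ(a₁ ⋯ aₙ)` modulo `p`, defined recursively on the binary word. -/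
def valp (p : ℕ) : List Bool → ZMod p
  | [] => 0
  | a :: t => ((if a then 1 else 0) + valp p t) * (2 : ZMod p)⁻¹

private def Nv : List Bool → ℕ
  | [] => 0
  | a :: t => (if a then 2 ^ t.length else 0) + Nv t

private def rho : List Bool → ℚ
  | [] => 0
  | a :: t => ((if a then 1 else 0) + rho t) / 2

private lemma rho_nonneg : ∀ u : List Bool, 0 ≤ rho u
  | [] => le_refl 0
  | a :: t => by
      have h := rho_nonneg t
      unfold rho
      cases a <;> norm_num <;> linarith

private lemma rho_le : ∀ u : List Bool, rho u + (2:ℚ)⁻¹ ^ u.length ≤ 1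
  | [] => by simp [rho]
  | a :: t => by
      have h := rho_le t
      unfold rho
      simp only [List.length_cons, pow_succ]
      cases a <;> norm_num <;> linarith

private lemma rho_mul : ∀ u : List Bool, (2:ℚ) ^ u.length * rho u = (Nv u : ℚ)
  | [] => by simp [rho, Nv]
  | a :: t => by
      have h := rho_mul t
      unfold rho Nv
      simp only [List.length_cons, pow_succ]
      cases a <;> norm_num <;> push_cast <;> rw [← h] <;> ring

private lemma valp_mul (p : ℕ) (h2 : (2:ZMod p) * (2:ZMod p)⁻¹ = 1) (u : List Bool) :
    (2:ZMod p) ^ u.length * valp p u = (Nv u : ZMod p) := by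
  induction u with
  | nil => simp [valp, Nv]
  | cons a t ih =>
      simp only [valp, Nv, List.length_cons, pow_succ]
      have e : (2:ZMod p) ^ t.length * 2 * (((if a then (1:ZMod p) else 0) + valp p t) * 2⁻¹)
          = (2:ZMod p) ^ t.length * ((if a then (1:ZMod p) else 0) + valp p t) * (2 * 2⁻¹) := by
        ring
      rw [e, h2, mul_one, mul_add, ih]
      cases a <;> simp <;> push_cast <;> ring

private lemma lex_irrefl : ∀ u : List Bool, ¬ List.Lex (· < ·) u u := by
  intro u
  induction u with
  | nil => intro h; cases h
  | cons a t ih =>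
      intro h
      cases h with
      | cons h => exact ih h
      | rel h => exact absurd h (lt_irrefl a)

private lemma rho_step : ∀ {u v : List Bool}, List.Lex (· < ·) u v → ¬ u <+: v →
    rho u + (2:ℚ)⁻¹ ^ u.length ≤ rho v := by
  intro u v h
  induction h with
  | nil => intro hp; exact absurd List.nil_prefix hp
  | @cons a l₁ l₂ h ih =>
      intro hp
      have hnp : ¬ l₁ <+: l₂ := fun hq => hp (List.cons_prefix_cons.mpr ⟨rfl, hq⟩)
      have := ih hnp
      show ((if a then (1:ℚ) else 0) + rho l₁) / 2 + (2:ℚ)⁻¹ ^ (l₁.length + 1)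
          ≤ ((if a then (1:ℚ) else 0) + rho l₂) / 2
      rw [pow_succ]
      cases a <;> norm_num <;> linarith
  | @rel a l₁ b l₂ hab =>
      intro _
      obtain ⟨ha, hb⟩ := Bool.lt_iff.mp hab
      subst ha; subst hb
      have h1 := rho_le l₁
      have h2 := rho_nonneg l₂
      show ((if false then (1:ℚ) else 0) + rho l₁) / 2 + (2:ℚ)⁻¹ ^ (l₁.length + 1)
          ≤ ((if true then (1:ℚ) else 0) + rho l₂) / 2
      rw [pow_succ]
      norm_num
      linarith

private lemma map_sum_range (f : List Bool → ℚ) : ∀ L : List (List Bool),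
    (L.map f).sum = ∑ j ∈ Finset.range L.length, f (L.getD j []) := by
  intro L
  induction L with
  | nil => simp
  | cons a t ih =>
      simp [Finset.sum_range_succ', ih, add_comm]

/-- Let `p ≥ 3` be odd and `q` the multiplicative order of `2` modulo `p`.  Let `S` be a
complete prefix code, presented as the list `L` of its elements in lexicographic order
(nonempty, sorted, prefix-free, `Σ 2^{−|u|} = 1`), with `q ∣ |u|` for every `u ∈ S`.
Then `val_p(u_i) = i` in `ZMod p` for every `0 ≤ i ≤ n−1`: the dyadic rationals of the
leaves modulo `p` read `0, 1, 2, …, p−1, 0, 1, …, p−1, …, 0` from left to right. -/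
theorem valp_of_q_divisible_code (p : ℕ) (hp3 : 3 ≤ p) (hodd : Odd p)
    (L : List (List Bool)) (hne : L ≠ [])
    (hsorted : L.Pairwise (· < ·))
    (hprefixfree : ∀ u ∈ L, ∀ v ∈ L, u ≠ v → ¬ u <+: v)
    (hsum : (L.map fun u => ((2 : ℚ)⁻¹) ^ u.length).sum = 1)
    (hdvd : ∀ u ∈ L, orderOf (2 : ZMod p) ∣ u.length) :
    ∀ i : ℕ, i < L.length → valp p (L.getD i []) = (i : ZMod p) := by
  haveI : NeZero p := ⟨by omega⟩
  have hunit : IsUnit (2 : ZMod p) := by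
    have hcop : Nat.Coprime 2 p := by
      have hmod : p % 2 = 1 := Nat.odd_iff.mp hodd
      exact (Nat.prime_two.coprime_iff_not_dvd).mpr (by omega)
    have := (ZMod.isUnit_iff_coprime 2 p).mpr hcop
    simpa using this
  have h2 : (2:ZMod p) * (2:ZMod p)⁻¹ = 1 := ZMod.mul_inv_of_unit _ hunit
  set n := L.length with hn
  set d : ℕ → ℕ := fun j => (L.getD j []).length with hd
  set x : ℕ → ℚ := fun j => rho (L.getD j []) with hx
  set ℓ : ℕ → ℚ := fun j => (2:ℚ)⁻¹ ^ d j with hℓ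
  set S : ℕ → ℚ := fun i => ∑ j ∈ Finset.range i, ℓ j with hS
  have hmem : ∀ j, j < n → L.getD j [] ∈ L := by
    intro j hj
    rw [List.getD_eq_getElem _ _ hj]
    exact List.getElem_mem hj
  have hstep : ∀ i, i + 1 < n → x i + ℓ i ≤ x (i+1) := by
    intro i hi
    have h1 : i < n := by omega
    have hlt : L.get ⟨i, h1⟩ < L.get ⟨i+1, hi⟩ :=
      hsorted.rel_get_of_lt (by simp [Fin.lt_def])
    have hne' : L.get ⟨i, h1⟩ ≠ L.get ⟨i+1, hi⟩ := by
      intro he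
      exact lex_irrefl _ (he ▸ hlt)
    have hpf := hprefixfree _ (List.get_mem L ⟨i, h1⟩) _ (List.get_mem L ⟨i+1, hi⟩) hne'
    have := rho_step hlt hpf
    simp only [hx, hℓ, hd, List.getD_eq_getElem _ _ h1, List.getD_eq_getElem _ _ hi]
    simpa only [List.get_eq_getElem] using this
  have hdef : ∀ i j, i ≤ j → j < n → x i - S i ≤ x j - S j := by
    intro i j hij hj
    induction j, hij using Nat.le_induction with
    | base => exact le_rfl
    | succ j hij ih =>
        have hj' : j < n := by omega
        have h1 := ih hj'
        have h2 := hstep j hj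
        have h3 : S (j+1) = S j + ℓ j := Finset.sum_range_succ _ _
        linarith
  have hSn : S n = 1 := by
    rw [← hsum, map_sum_range]
  have hnpos : 0 < n := List.length_pos_iff.mpr hne
  have hxS : ∀ i, i < n → x i = S i := by
    intro i hi
    have l1 : x 0 - S 0 ≤ x i - S i := hdef 0 i (by omega) hi
    have l2 : x i - S i ≤ x (n-1) - S (n-1) := hdef i (n-1) (by omega) (by omega)
    have l3 : S ((n-1)+1) = S (n-1) + ℓ (n-1) := Finset.sum_range_succ _ _
    have l3' : (n-1)+1 = n := by omega
    rw [l3'] at l3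
    have l4 : 0 ≤ x 0 := rho_nonneg _
    have l5 : S 0 = 0 := by simp [hS]
    have l6 : x (n-1) + ℓ (n-1) ≤ 1 := rho_le _
    linarith
  -- power-of-two bookkeeping
  intro i hi
  set M := (Finset.range n).sup d with hM
  have hdM : ∀ j, j < n → d j ≤ M := fun j hj => Finset.le_sup (Finset.mem_range.mpr hj)
  have hpow : ∀ jd, jd ≤ M → (2:ℚ) ^ (M - jd) = 2 ^ M * (2:ℚ)⁻¹ ^ jd := by
    intro jd hjd
    rw [pow_sub₀ _ (two_ne_zero) hjd, inv_pow]
  have e1 : (Nv (L.getD i []) : ℚ) * 2 ^ (M - d i) = ∑ j ∈ Finset.range i, (2:ℚ) ^ (M - d j) := by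
    have hr := rho_mul (L.getD i [])
    have hdi : d i ≤ M := hdM i hi
    calc (Nv (L.getD i []) : ℚ) * 2 ^ (M - d i)
        = (2 ^ (d i) * rho (L.getD i [])) * 2 ^ (M - d i) := by rw [hr]
      _ = 2 ^ (d i + (M - d i)) * rho (L.getD i []) := by rw [pow_add]; ring
      _ = 2 ^ M * x i := by rw [Nat.add_sub_cancel' hdi]
      _ = 2 ^ M * S i := by rw [hxS i hi]
      _ = ∑ j ∈ Finset.range i, 2 ^ M * (2:ℚ)⁻¹ ^ d j := by rw [hS, Finset.mul_sum]
      _ = ∑ j ∈ Finset.range i, (2:ℚ) ^ (M - d j) := by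
          refine Finset.sum_congr rfl ?_
          intro j hj
          rw [hpow (d j) (hdM j ((Finset.mem_range.mp hj).trans hi))]
  have e2 : Nv (L.getD i []) * 2 ^ (M - d i) = ∑ j ∈ Finset.range i, 2 ^ (M - d j) := by
    exact_mod_cast e1
  have e3 : (Nv (L.getD i []) : ZMod p) * 2 ^ (M - d i)
      = ∑ j ∈ Finset.range i, (2:ZMod p) ^ (M - d j) := by
    have := congrArg (Nat.cast : ℕ → ZMod p) e2
    push_cast at this
    exact this
  have hone : ∀ j, j < n → (2:ZMod p) ^ (d j) = 1 := by
    intro j hj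
    exact orderOf_dvd_iff_pow_eq_one.mp (hdvd _ (hmem j hj))
  have hfull : ∀ j, j < n → (2:ZMod p) ^ (M - d j) = 2 ^ M := by
    intro j hj
    calc (2:ZMod p) ^ (M - d j) = 2 ^ (M - d j) * 2 ^ (d j) := by rw [hone j hj, mul_one]
      _ = 2 ^ (M - d j + d j) := (pow_add _ _ _).symm
      _ = 2 ^ M := by rw [Nat.sub_add_cancel (hdM j hj)]
  rw [hfull i hi] at e3
  have e4 : (Nv (L.getD i []) : ZMod p) * 2 ^ M = (i : ZMod p) * 2 ^ M := by
    rw [e3]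
    rw [Finset.sum_congr rfl (fun j hj => hfull j (by
      have := Finset.mem_range.mp hj; omega))]
    simp [Finset.sum_const, Finset.card_range, nsmul_eq_mul]
  have hMunit : (2:ZMod p) ^ M * ((2:ZMod p) ^ M)⁻¹ = 1 :=
    ZMod.mul_inv_of_unit _ (hunit.pow M)
  have e5 : (Nv (L.getD i []) : ZMod p) = (i : ZMod p) := by
    have := congrArg (· * ((2:ZMod p) ^ M)⁻¹) e4
    simpa [mul_assoc, hMunit] using this
  calc valp p (L.getD i []) = 1 * valp p (L.getD i []) := (one_mul _).symm
    _ = (2:ZMod p) ^ (d i) * valp p (L.getD i []) := by rw [hone i hi]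
    _ = (Nv (L.getD i []) : ZMod p) := valp_mul p h2 _
    _ = (i : ZMod p) := e5
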